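/- Let $p$ and $q > q'$ be positive integers. Define $\epsilon_1(p,q) = \min\{\gamma \mid \gamma > q, \gamma = \sum_i \gamma_i \text{ with each } \gamma_i \in \Phi_p\} - q$ and $\epsilon_2(p,q) = \frac{\epsilon_1(p,q)}{q + \epsilon_1(p,q)}$. Then $\epsilon_1(p,q) \le \epsilon_1(p,q')$ and $\epsilon_2(p,q) < \epsilon_2(p,q')$. -/

import Mathlib

/-- The hyperstandard set `Φ_p = {1 - k/(p·m) | m ∈ ℕ⁺, 0 ≤ k ≤ p} ∩ [0,1]`. -/
def Phi (p : ℕ) : Set ℝ :=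
  {x | (∃ m k : ℕ, 0 < m ∧ k ≤ p ∧ x = 1 - (k : ℝ) / (p * m)) ∧ 0 ≤ x ∧ x ≤ 1}

/-- The set of finite sums of elements of `Φ_p` exceeding `q`. -/
def sumsGT (p q : ℕ) : Set ℝ :=
  {x | (q : ℝ) < x ∧ ∃ (n : ℕ) (f : Fin n → ℝ), (∀ i, f i ∈ Phi p) ∧ x = ∑ i, f i}

/-- `ε₁(p,q) = min{γ > q | γ a finite sum of elements of Φ_p} - q`. -/
noncomputable def eps1 (p q : ℕ) : ℝ := sInf (sumsGT p q) - q

/-- `ε₂(p,q) = ε₁(p,q)/(q + ε₁(p,q))`. -/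
noncomputable def eps2 (p q : ℕ) : ℝ := eps1 p q / (q + eps1 p q)

theorem gapLemma' (p : ℕ) (hp : 0 < p) :
    ∀ t : ℕ, ∀ c : ℝ, ∃ δ : ℝ, 0 < δ ∧
      ∀ l : List ℝ, l.length = t →
        (∀ d ∈ l, ∃ k m : ℕ, k ≤ p ∧ 0 < m ∧ d = (k : ℝ) / (p * m)) →
        l.sum < c → l.sum ≤ c - δ := by
  intro t
  induction t with
  | zero =>
    intro c
    refine ⟨if 0 < c then c else 1, ?_, ?_⟩
    · split
      · assumption
      · norm_num
    · intro l hl _ hs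
      rw [List.length_eq_zero_iff] at hl
      subst hl
      simp only [List.sum_nil] at hs ⊢
      rw [if_pos hs]
      linarith
  | succ t ih =>
    choose Δ hΔpos hΔ using ih
    intro c
    have hεpos : 0 < Δ c / 2 := half_pos (hΔpos c)
    set ε := Δ c / 2 with hε
    set M := ⌈1/ε⌉₊ with hMdef
    have hM : 1 ≤ M := Nat.one_le_ceil_iff.2 (by positivity)
    set F := (Finset.Icc 1 p) ×ˢ (Finset.Icc 1 M) with hF
    have hFne : F.Nonempty := ⟨(1,1), by simp [hF, Finset.mem_Icc]; exact ⟨hp, hM⟩⟩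
    refine ⟨min ε (F.inf' hFne fun km => Δ (c - (km.1 : ℝ) / (p * km.2))), ?_, ?_⟩
    · exact lt_min hεpos ((Finset.lt_inf'_iff hFne).2 fun b _ => hΔpos _)
    · intro l hl hmem hs
      match l with
      | d :: l' =>
        have hl' : l'.length = t := by simpa using hl
        obtain ⟨k, m, hk, hm, hd⟩ := hmem d List.mem_cons_self
        have hd0 : 0 ≤ d := by rw [hd]; positivity
        have hs0 : 0 ≤ l'.sum := by
          apply List.sum_nonneg
          intro x hx
          obtain ⟨k', m', _, _, hx'⟩ := hmem x (List.mem_cons_of_mem d hx)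
          rw [hx']; positivity
        rw [List.sum_cons] at hs ⊢
        rcases lt_or_ge d ε with hcase | hcase
        · have h1 : l'.sum < c := by linarith
          have h2 := hΔ c l' hl' (fun x hx => hmem x (List.mem_cons_of_mem d hx)) h1
          have h3 : min ε (F.inf' hFne fun km => Δ (c - (km.1 : ℝ) / (p * km.2))) ≤ ε :=
            min_le_left _ _
          have : ε = Δ c / 2 := hε
          linarith
        · -- d ≥ ε, so k ≥ 1 and m ≤ M
          have hdpos : 0 < d := lt_of_lt_of_le hεpos hcase
          have hk1 : 1 ≤ k := by
            by_contra hk0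
            push_neg at hk0
            interval_cases k
            simp at hd
            rw [hd] at hdpos
            exact lt_irrefl 0 hdpos
          have hd1m : d ≤ 1 / (m : ℝ) := by
            rw [hd]
            rw [div_le_div_iff₀ (by positivity) (by exact_mod_cast hm)]
            push_cast
            nlinarith [(by exact_mod_cast hk : (k:ℝ) ≤ p), (Nat.cast_pos.2 hm : (0:ℝ) < m),
              (Nat.cast_pos.2 hp : (0:ℝ) < p)]
          have hmM : m ≤ M := by
            have h1 : (m : ℝ) ≤ 1 / ε := by
              rw [le_div_iff₀ hεpos]
              have hm0 : (0:ℝ) < m := by exact_mod_cast hm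
              calc (m:ℝ) * ε ≤ (m:ℝ) * d := by nlinarith
                _ ≤ (m:ℝ) * (1/(m:ℝ)) := by nlinarith
                _ = 1 := by field_simp
            calc m ≤ ⌈(m:ℝ)⌉₊ := by simp
              _ ≤ ⌈1/ε⌉₊ := Nat.ceil_le_ceil h1
          have hmemF : (k, m) ∈ F := by
            simp [hF, Finset.mem_Icc]
            exact ⟨⟨hk1, hk⟩, ⟨hm, hmM⟩⟩
          have hc' : l'.sum < c - d := by linarith
          have h2 := hΔ (c - d) l' hl' (fun x hx => hmem x (List.mem_cons_of_mem d hx)) hc'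
          have h3 : (F.inf' hFne fun km => Δ (c - (km.1 : ℝ) / (p * km.2))) ≤ Δ (c - d) := by
            have := Finset.inf'_le (fun km : ℕ × ℕ => Δ (c - (km.1 : ℝ) / (p * km.2))) hmemF
            rwa [← hd] at this
          have h4 : min ε (F.inf' hFne fun km => Δ (c - (km.1 : ℝ) / (p * km.2))) ≤ Δ (c - d) :=
            le_trans (min_le_right _ _) h3
          linarith

theorem phi_pos_lb (p : ℕ) (hp : 0 < p) {a : ℝ} (ha : a ∈ Phi p) (h0 : 0 < a) :
    1 / (2 * (p : ℝ)) ≤ a := by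
  obtain ⟨⟨m, k, hm, hk, he⟩, h01, h1⟩ := ha
  have hpR : (0:ℝ) < p := Nat.cast_pos.2 hp
  have hp1 : (1:ℝ) ≤ p := by exact_mod_cast hp
  have hmR : (0:ℝ) < m := Nat.cast_pos.2 hm
  have hkR : (k:ℝ) ≤ p := by exact_mod_cast hk
  rcases Nat.lt_or_ge m 2 with h2 | h2
  · -- m = 1
    interval_cases m
    have hep : a = 1 - (k:ℝ)/p := by rw [he]; norm_num
    have hkp : (k:ℝ)/p < 1 := by linarith
    have hkpn : k < p := by
      by_contra hc
      push_neg at hc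
      have : (p:ℝ) ≤ k := by exact_mod_cast hc
      rw [div_lt_one hpR] at hkp
      linarith
    have hk1R : (k:ℝ) ≤ (p:ℝ) - 1 := by
      have : k + 1 ≤ p := hkpn
      have : ((k:ℝ)) + 1 ≤ p := by exact_mod_cast this
      linarith
    have ht : 1/(2*(p:ℝ)) * (2*p) = 1 := by field_simp
    have hA : (k:ℝ)/p * p = k := div_mul_cancel₀ _ hpR.ne'
    rw [hep]
    nlinarith [ht, hA, hk1R, hpR]
  · -- m ≥ 2
    have hm2 : (2:ℝ) ≤ m := by exact_mod_cast h2
    have hfrac : (k:ℝ) / (p * m) ≤ 1 / 2 := by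
      rw [div_le_div_iff₀ (by positivity) two_pos]
      nlinarith
    have : (1:ℝ)/2 ≤ a := by rw [he]; linarith
    have h2p : 1 / (2 * (p:ℝ)) ≤ 1/2 := by
      rw [div_le_div_iff₀ (by positivity) two_pos]
      nlinarith
    linarith

theorem posList (p : ℕ) :
    ∀ l : List ℝ, (∀ a ∈ l, a ∈ Phi p) →
      ∃ l₀ : List ℝ, (∀ a ∈ l₀, a ∈ Phi p ∧ 0 < a) ∧ l₀.sum = l.sum := by
  intro l
  induction l with
  | nil => exact fun _ => ⟨[], by simp, rfl⟩
  | cons a l ih =>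
    intro hl
    obtain ⟨l₀, h1, h2⟩ := ih fun b hb => hl b (List.mem_cons_of_mem a hb)
    have haPhi : a ∈ Phi p := hl a List.mem_cons_self
    rcases eq_or_lt_of_le haPhi.2.1 with ha0 | ha0
    · exact ⟨l₀, h1, by rw [h2, List.sum_cons, ← ha0, zero_add]⟩
    · exact ⟨a :: l₀, by
        rintro b hb
        rcases List.mem_cons.1 hb with rfl | hb
        · exact ⟨haPhi, ha0⟩
        · exact h1 b hb, by rw [List.sum_cons, List.sum_cons, h2]⟩

theorem map_one_sub_sum : ∀ l : List ℝ, (l.map (fun a => 1 - a)).sum = l.length - l.sum := by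
  intro l
  induction l with
  | nil => simp
  | cons a l ih =>
    simp only [List.map_cons, List.sum_cons, List.length_cons, ih]
    push_cast
    ring

theorem sums_lb (p Q : ℕ) (hp : 0 < p) :
    ∃ δ : ℝ, 0 < δ ∧ ∀ x ∈ sumsGT p Q, (Q:ℝ) + δ ≤ x := by
  choose Δ hΔpos hΔ using gapLemma' p hp
  set T := 2*p*(Q+1) with hT
  have hQT : Q+1 ≤ T := Nat.le_mul_of_pos_left (Q+1) (by omega)
  set G := Finset.Icc (Q+1) T with hG
  have hGne : G.Nonempty := ⟨Q+1, by simp [hG, Finset.mem_Icc]; exact hQT⟩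
  refine ⟨min 1 (G.inf' hGne fun n => Δ n ((n:ℝ) - Q)),
    lt_min one_pos ((Finset.lt_inf'_iff hGne).2 fun b _ => hΔpos _ _), ?_⟩
  rintro x ⟨hx, n, f, hf, rfl⟩
  by_cases hbig : (Q:ℝ) + 1 ≤ ∑ i, f i
  · have := min_le_left (1:ℝ) (G.inf' hGne fun n => Δ n ((n:ℝ) - Q))
    linarith
  push_neg at hbig
  obtain ⟨l₀, hmem, hsum⟩ := posList p (List.ofFn f) (by
    intro a ha
    rw [List.mem_ofFn] at ha
    obtain ⟨i, rfl⟩ := ha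
    exact hf i)
  rw [List.sum_ofFn] at hsum
  set n₀ := l₀.length with hn₀
  have hub : ∀ a ∈ l₀, a ≤ 1 := fun a ha => (hmem a ha).1.2.2
  have hlbe : ∀ a ∈ l₀, 1/(2*(p:ℝ)) ≤ a := fun a ha =>
    phi_pos_lb p hp (hmem a ha).1 (hmem a ha).2
  have hpR : (0:ℝ) < p := Nat.cast_pos.2 hp
  have hsum_le : l₀.sum ≤ (n₀ : ℝ) := by
    have := List.sum_le_card_nsmul l₀ 1 hub
    simpa using this
  have hsum_ge : (n₀ : ℝ) * (1/(2*(p:ℝ))) ≤ l₀.sum := by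
    have := List.card_nsmul_le_sum l₀ (1/(2*(p:ℝ))) hlbe
    simpa [mul_comm] using this
  have hQn : Q + 1 ≤ n₀ := by
    have h5 : (Q:ℝ) < (n₀:ℝ) := by rw [← hsum] at hx; linarith
    exact Nat.succ_le_of_lt (by exact_mod_cast h5)
  have hnT : n₀ ≤ T := by
    have ht2 : (1/(2*(p:ℝ)))*(2*(p:ℝ)) = 1 := by field_simp
    have h1 : (n₀:ℝ) < 2*(p:ℝ)*((Q:ℝ)+1) := by
      rw [hsum] at hsum_ge
      nlinarith [hsum_ge, hbig, ht2, hpR]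
    have h6 : (n₀:ℝ) < ((T:ℕ):ℝ) := by rw [hT]; push_cast; linarith
    exact le_of_lt (by exact_mod_cast h6)
  have hmemG : n₀ ∈ G := Finset.mem_Icc.2 ⟨hQn, hnT⟩
  set ld := l₀.map (fun a => 1 - a) with hld
  have hldlen : ld.length = n₀ := by simp [hld, hn₀]
  have hldmem : ∀ d ∈ ld, ∃ k m : ℕ, k ≤ p ∧ 0 < m ∧ d = (k : ℝ) / (p * m) := by
    intro d hd
    obtain ⟨a, ha, rfl⟩ := List.mem_map.1 hd
    obtain ⟨⟨m, k, hm, hk, he⟩, _, _⟩ := (hmem a ha).1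
    exact ⟨k, m, hk, hm, by rw [he]; ring⟩
  have hldsum : ld.sum = (n₀:ℝ) - l₀.sum := by rw [hld, map_one_sub_sum]
  have hlt : ld.sum < (n₀:ℝ) - Q := by rw [hldsum, hsum]; linarith
  have hkey := hΔ n₀ ((n₀:ℝ) - Q) ld hldlen hldmem hlt
  have hinf : (G.inf' hGne fun n => Δ n ((n:ℝ) - Q)) ≤ Δ n₀ ((n₀:ℝ) - Q) :=
    Finset.inf'_le _ hmemG
  have hmin := min_le_right (1:ℝ) (G.inf' hGne fun n => Δ n ((n:ℝ) - Q))
  rw [hldsum, hsum] at hkey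
  linarith

theorem eps_antitone (p q q' : ℕ) (hp : 0 < p) (hq' : 0 < q') (h : q' < q) :
    eps1 p q ≤ eps1 p q' ∧ eps2 p q < eps2 p q' := by
  obtain ⟨δ, hδ, hlb⟩ := sums_lb p q' hp
  have hone : (1:ℝ) ∈ Phi p := ⟨⟨1, 0, one_pos, Nat.zero_le p, by norm_num⟩, by norm_num⟩
  have hne : ∀ Q : ℕ, (sumsGT p Q).Nonempty := by
    intro Q
    refine ⟨(Q:ℝ)+1, by linarith, Q+1, fun _ => 1, fun _ => hone, ?_⟩
    simp
  have hbdd : ∀ Q : ℕ, BddBelow (sumsGT p Q) := fun Q => ⟨Q, fun x hx => hx.1.le⟩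
  set r := q - q' with hr
  have hrcast : ((r:ℕ):ℝ) = (q:ℝ) - q' := by rw [hr, Nat.cast_sub h.le]
  have hshift : ∀ x ∈ sumsGT p q', x + r ∈ sumsGT p q := by
    rintro x ⟨hx, n, f, hf, rfl⟩
    refine ⟨by rw [hrcast]; push_cast; linarith, n + r, Fin.append f (fun _ => 1), ?_, ?_⟩
    · intro i
      refine Fin.addCases (fun i => ?_) (fun i => ?_) i
      · simpa [Fin.append_left] using hf i
      · simpa [Fin.append_right] using hone
    · rw [Fin.sum_univ_add]
      simp [Fin.append_left, Fin.append_right]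
  have hle : sInf (sumsGT p q) ≤ sInf (sumsGT p q') + ((q:ℝ) - q') := by
    have h8 : sInf (sumsGT p q) - ((q:ℝ) - q') ≤ sInf (sumsGT p q') := by
      apply le_csInf (hne q')
      intro x hx
      have := csInf_le (hbdd q) (hshift x hx)
      rw [hrcast] at this
      linarith
    linarith
  have h1 : eps1 p q ≤ eps1 p q' := by unfold eps1; linarith
  have he'lb : (q':ℝ) + δ ≤ sInf (sumsGT p q') := le_csInf (hne q') hlb
  have he'pos : 0 < eps1 p q' := by unfold eps1; linarith
  have hepos : 0 ≤ eps1 p q := by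
    have : (q:ℝ) ≤ sInf (sumsGT p q) := le_csInf (hne q) fun x hx => hx.1.le
    unfold eps1; linarith
  refine ⟨h1, ?_⟩
  unfold eps2
  set e := eps1 p q
  set e' := eps1 p q'
  have hq'R : (1:ℝ) ≤ q' := by exact_mod_cast hq'
  have hqq' : (q':ℝ) < q := by exact_mod_cast h
  have d1 : (0:ℝ) < q + e := by linarith
  have d2 : (0:ℝ) < q + e' := by linarith
  have d3 : (0:ℝ) < q' + e' := by linarith
  have step1 : e/((q:ℝ)+e) ≤ e'/((q:ℝ)+e') := by
    rw [div_le_div_iff₀ d1 d2]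
    nlinarith
  have step2 : e'/((q:ℝ)+e') < e'/((q':ℝ)+e') :=
    div_lt_div_of_pos_left he'pos d3 (by linarith)
  linarith
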